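/- Every group of order 16 containing a subgroup isomorphic to (Z/2)³ and also containing an element of order 2 outside that subgroup is isomorphic to (Z/2)⁴ or to D₈ × Z/2, where D₈ is the dihedral group of order 8. -/

import Mathlib

namespace Stmt5Aux

variable {G : Type*} [Group G]

noncomputable def plift (p : G) (hp4 : p ^ 4 = 1) : ZMod 4 →+ Additive G :=
  ZMod.lift 4 ⟨zmultiplesHom (Additive G) (Additive.ofMul p), by
      show ((4 : ℤ) • Additive.ofMul p) = 0
      rw [← ofMul_zpow, show ((4:ℤ)) = ((4:ℕ):ℤ) from rfl, zpow_natCast, hp4]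
      rfl⟩

/-- `P i = p ^ i` for `i : ZMod 4`. -/
noncomputable def P (p : G) (hp4 : p ^ 4 = 1) (i : ZMod 4) : G :=
  Additive.toMul (plift p hp4 i)

lemma P_int (p : G) (hp4 : p ^ 4 = 1) (n : ℤ) : P p hp4 ((n : ZMod 4)) = p ^ n := by
  rw [P, plift, ZMod.lift_coe]
  show Additive.toMul ((n : ℤ) • Additive.ofMul p) = p ^ n
  rw [← ofMul_zpow]
  rfl

lemma P_add (p : G) (hp4 : p ^ 4 = 1) (i j : ZMod 4) :
    P p hp4 (i + j) = P p hp4 i * P p hp4 j := by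
  rw [P, P, P, map_add]; rfl

lemma P_zero (p : G) (hp4 : p ^ 4 = 1) : P p hp4 0 = 1 := by rw [P, map_zero]; rfl

lemma P_one (p : G) (hp4 : p ^ 4 = 1) : P p hp4 1 = p := by
  have := P_int p hp4 1
  simpa using this

lemma P_two (p : G) (hp4 : p ^ 4 = 1) : P p hp4 2 = p * p := by
  have := P_int p hp4 2
  norm_num at this
  rw [this, pow_two]

lemma P_neg (p : G) (hp4 : p ^ 4 = 1) (i : ZMod 4) : P p hp4 (-i) = (P p hp4 i)⁻¹ := by
  have h := P_add p hp4 (-i) i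
  rw [neg_add_cancel, P_zero] at h
  exact eq_inv_of_mul_eq_one_left h.symm

lemma P_conj (p q : G) (hp4 : p ^ 4 = 1) (hq : q * q = 1) (hpq : q * p * q = p⁻¹)
    (i : ZMod 4) : q * P p hp4 i * q = (P p hp4 i)⁻¹ := by
  have hqi : q⁻¹ = q := inv_eq_of_mul_eq_one_right hq
  obtain ⟨n, rfl⟩ := ZMod.intCast_surjective i
  rw [P_int]
  have h1 : q * p * q⁻¹ = p⁻¹ := by rw [hqi]; exact hpq
  calc q * p ^ n * q = (q * p * q⁻¹) ^ n := by rw [conj_zpow, hqi]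
    _ = (p ^ n)⁻¹ := by rw [h1, inv_zpow]

lemma P_swap (p q : G) (hp4 : p ^ 4 = 1) (hq : q * q = 1) (hpq : q * p * q = p⁻¹)
    (i : ZMod 4) : P p hp4 i * q = q * P p hp4 (-i) := by
  have h := P_conj p q hp4 hq hpq i
  rw [P_neg]
  calc P p hp4 i * q = q * (q * P p hp4 i * q) := by
        rw [← mul_assoc, ← mul_assoc, hq, one_mul]
    _ = q * (P p hp4 i)⁻¹ := by rw [h]

open DihedralGroup in
noncomputable def dihedralHom (p q : G) (hp4 : p ^ 4 = 1) (hq : q * q = 1)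
    (hpq : q * p * q = p⁻¹) : DihedralGroup 4 →* G where
  toFun := fun g => match g with
    | .r i => P p hp4 i
    | .sr i => q * P p hp4 i
  map_one' := by
    show P p hp4 0 = 1
    exact P_zero p hp4
  map_mul' := by
    rintro (i | i) (j | j)
    · show P p hp4 (i + j) = _
      rw [P_add]
    · show q * P p hp4 (j - i) = P p hp4 i * (q * P p hp4 j)
      rw [← mul_assoc, P_swap p q hp4 hq hpq, mul_assoc, ← P_add, neg_add_eq_sub]
    · show q * P p hp4 (i + j) = q * P p hp4 i * P p hp4 j
      rw [P_add, mul_assoc]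
    · show P p hp4 (j - i) = q * P p hp4 i * (q * P p hp4 j)
      rw [mul_assoc, ← mul_assoc (P p hp4 i), P_swap p q hp4 hq hpq, ← mul_assoc,
        ← mul_assoc, hq, one_mul, ← P_add, neg_add_eq_sub]

lemma dihedralHom_r_one (p q : G) (hp4 : p ^ 4 = 1) (hq : q * q = 1)
    (hpq : q * p * q = p⁻¹) : dihedralHom p q hp4 hq hpq (.r 1) = p := P_one p hp4

lemma dihedralHom_sr_zero (p q : G) (hp4 : p ^ 4 = 1) (hq : q * q = 1)
    (hpq : q * p * q = p⁻¹) : dihedralHom p q hp4 hq hpq (.sr 0) = q := by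
  show q * P p hp4 0 = q
  rw [P_zero, mul_one]

lemma dihedralHom_commute (p q : G) (hp4 : p ^ 4 = 1) (hq : q * q = 1)
    (hpq : q * p * q = p⁻¹) (w : G) (hwp : Commute p w) (hwq : Commute q w)
    (m : DihedralGroup 4) : Commute (dihedralHom p q hp4 hq hpq m) w := by
  have hP : ∀ i : ZMod 4, Commute (P p hp4 i) w := by
    intro i
    obtain ⟨n, rfl⟩ := ZMod.intCast_surjective i
    rw [P_int]
    exact hwp.zpow_left n
  rcases m with i | i
  · exact hP i
  · exact hwq.mul_left (hP i)

end Stmt5Aux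

namespace Stmt5Aux2

variable {G : Type*} [Group G]

noncomputable def zmod2Hom (z : G) (hz : z * z = 1) : Multiplicative (ZMod 2) →* G :=
  AddMonoidHom.toMultiplicativeLeft <| ZMod.lift 2
    ⟨zmultiplesHom (Additive G) (Additive.ofMul z), by
      show ((2 : ℤ) • Additive.ofMul z) = 0
      rw [← ofMul_zpow, zpow_two, hz]
      rfl⟩

lemma zmod2Hom_one (z : G) (hz : z * z = 1) :
    zmod2Hom z hz (Multiplicative.ofAdd 1) = z := by
  unfold zmod2Hom
  rw [AddMonoidHom.coe_toMultiplicativeLeft]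
  show Additive.toMul (ZMod.lift 2 _ ((Multiplicative.ofAdd (1 : ZMod 2)).toAdd)) = z
  rw [show ((Multiplicative.ofAdd (1 : ZMod 2)).toAdd) = (((1:ℤ) : ZMod 2)) by norm_cast, ZMod.lift_coe]
  show Additive.toMul ((1 : ℤ) • Additive.ofMul z) = z
  rw [← ofMul_zpow]
  simp

lemma zmod2Hom_cases (z : G) (hz : z * z = 1) (n : Multiplicative (ZMod 2)) :
    zmod2Hom z hz n = 1 ∨ zmod2Hom z hz n = z := by
  have h : n = 1 ∨ n = Multiplicative.ofAdd 1 := by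
    rcases ZMod.intCast_surjective (Multiplicative.toAdd n) with ⟨m, hm⟩
    have : ∀ a : ZMod 2, a = 0 ∨ a = 1 := by decide
    rcases this (Multiplicative.toAdd n) with h | h
    · left
      apply Multiplicative.toAdd.injective
      simpa using h
    · right
      apply Multiplicative.toAdd.injective
      simpa using h
  rcases h with rfl | rfl
  · left; exact map_one _
  · right; exact zmod2Hom_one z hz

/-- distribute Multiplicative over product -/
def multProd {α β : Type*} [Add α] [Add β] :
    Multiplicative (α × β) ≃* Multiplicative α × Multiplicative β where
  toFun x := (Multiplicative.ofAdd (Multiplicative.toAdd x).1,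
    Multiplicative.ofAdd (Multiplicative.toAdd x).2)
  invFun x := Multiplicative.ofAdd (Multiplicative.toAdd x.1, Multiplicative.toAdd x.2)
  left_inv _ := rfl
  right_inv _ := rfl
  map_mul' _ _ := rfl

end Stmt5Aux2

namespace Stmt5Aux3

def e2 : (Fin 4 → ZMod 2) ≃+ (ZMod 2 × ZMod 2 × ZMod 2 × ZMod 2) where
  toFun f := (f 0, f 1, f 2, f 3)
  invFun x := ![x.1, x.2.1, x.2.2.1, x.2.2.2]
  left_inv f := by
    funext i
    fin_cases i <;> rfl
  right_inv x := rfl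
  map_add' f g := rfl

lemma elemAbelian {G : Type*} [CommGroup G] [Fintype G] (hc : Fintype.card G = 16)
    (h2 : ∀ g : G, g * g = 1) :
    Nonempty (G ≃* (Multiplicative (ZMod 2) × Multiplicative (ZMod 2) ×
      Multiplicative (ZMod 2) × Multiplicative (ZMod 2))) := by
  letI : Module (ZMod 2) (Additive G) := AddCommGroup.zmodModule (by
    intro x
    show (2 : ℕ) • x = 0
    have := h2 (Additive.toMul x)
    rw [two_nsmul]
    exact congrArg Additive.ofMul this)
  haveI : Module.Finite (ZMod 2) (Additive G) := Module.Finite.of_finite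
  haveI : FiniteDimensional (ZMod 2) (Additive G) := inferInstance
  have hrank : Module.finrank (ZMod 2) (Additive G) = 4 := by
    have hcard : Fintype.card (Additive G) =
        Fintype.card (ZMod 2) ^ Module.finrank (ZMod 2) (Additive G) :=
      Module.card_eq_pow_finrank
    rw [Fintype.card_additive, hc, ZMod.card] at hcard
    have : (16 : ℕ) = 2 ^ 4 := by norm_num
    rw [this] at hcard
    exact (Nat.pow_right_injective (le_refl 2) hcard.symm)
  let bb := Module.finBasis (ZMod 2) (Additive G)
  rw [hrank] at bb
  let eL : Additive G ≃ₗ[ZMod 2] (Fin 4 → ZMod 2) := bb.equivFun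
  let eadd : Additive G ≃+ (ZMod 2 × ZMod 2 × ZMod 2 × ZMod 2) :=
    eL.toAddEquiv.trans e2
  let emul : G ≃* Multiplicative (ZMod 2 × ZMod 2 × ZMod 2 × ZMod 2) :=
    AddEquiv.toMultiplicativeRight eadd
  refine ⟨emul.trans ?_⟩
  refine (Stmt5Aux2.multProd).trans ?_
  exact MulEquiv.prodCongr (MulEquiv.refl _) Stmt5Aux2.multProd |>.trans
    (MulEquiv.prodCongr (MulEquiv.refl _) (MulEquiv.prodCongr (MulEquiv.refl _) Stmt5Aux2.multProd))

end Stmt5Aux3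

theorem stmt5 {B : Type*} [Group B] [Fintype B] (hcard : Fintype.card B = 16)
    (A : Subgroup B)
    (hA : Nonempty (A ≃* (Multiplicative (ZMod 2) × Multiplicative (ZMod 2) × Multiplicative (ZMod 2))))
    (hinv : ∃ b : B, b ∉ A ∧ orderOf b = 2) :
    Nonempty (B ≃* (Multiplicative (ZMod 2) × Multiplicative (ZMod 2) ×
        Multiplicative (ZMod 2) × Multiplicative (ZMod 2))) ∨
    Nonempty (B ≃* (DihedralGroup 4 × Multiplicative (ZMod 2))) := by
  obtain ⟨e⟩ := hA
  obtain ⟨b, hbA, hb2⟩ := hinv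
  have hb : b * b = 1 := by
    have h := pow_orderOf_eq_one b
    rw [hb2, pow_two] at h
    exact h
  have hbinv : b⁻¹ = b := inv_eq_of_mul_eq_one_right hb
  have cardB : Nat.card B = 16 := by rw [Nat.card_eq_fintype_card, hcard]
  have cardA : Nat.card A = 8 := by
    rw [Nat.card_congr e.toEquiv]
    simp [Nat.card_eq_fintype_card]
  have index2 : A.index = 2 := by
    have h := Subgroup.card_mul_index A
    rw [cardA, cardB] at h
    omega
  have hmul : ∀ u v : B, u * v ∈ A ↔ (u ∈ A ↔ v ∈ A) :=
    fun u v => Subgroup.mul_mem_iff_of_index_two index2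
  -- conjugation by b preserves A
  have hconjmem : ∀ a, a ∈ A → b * a * b ∈ A := by
    intro a ha
    rw [hmul, hmul]
    tauto
  -- A is commutative
  have hAcomm : ∀ u v : B, u ∈ A → v ∈ A → u * v = v * u := by
    intro u v hu hv
    have : (⟨u, hu⟩ : A) * ⟨v, hv⟩ = ⟨v, hv⟩ * ⟨u, hu⟩ :=
      e.injective (by rw [map_mul, map_mul, mul_comm])
    exact congrArg Subtype.val this
  -- every element of A is an involution
  have hA2 : ∀ u, u ∈ A → u * u = 1 := by
    intro u hu
    have hP2 : ∀ w : (Multiplicative (ZMod 2) × Multiplicative (ZMod 2) ×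
        Multiplicative (ZMod 2)), w * w = 1 := by decide
    have : (⟨u, hu⟩ : A) * ⟨u, hu⟩ = 1 := e.injective (by rw [map_mul, map_one]; exact hP2 _)
    exact congrArg Subtype.val this
  by_cases hcb : ∀ a ∈ A, b * a = a * b
  · -- abelian case
    left
    have hdecomp : ∀ g : B, g ∈ A ∨ ∃ a, a ∈ A ∧ g = a * b := by
      intro g
      by_cases hg : g ∈ A
      · exact Or.inl hg
      · right
        refine ⟨g * b, ?_, ?_⟩
        · rw [hmul]; tauto
        · rw [mul_assoc, hb, mul_one]
    have hBcomm : ∀ g h : B, g * h = h * g := by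
      have key : ∀ g h : B, g ∈ A → h * g = g * h := by
        intro g h hg
        rcases hdecomp h with hh | ⟨a2, ha2, rfl⟩
        · exact hAcomm h g hh hg
        · calc a2 * b * g = a2 * (b * g) := by rw [mul_assoc]
            _ = a2 * (g * b) := by rw [hcb g hg]
            _ = (a2 * g) * b := by rw [mul_assoc]
            _ = (g * a2) * b := by rw [hAcomm a2 g ha2 hg]
            _ = g * (a2 * b) := by rw [mul_assoc]
      intro g h
      rcases hdecomp g with hg | ⟨a1, ha1, rfl⟩
      · exact (key g h hg).symm
      · rcases hdecomp h with hh | ⟨a2, ha2, rfl⟩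
        · exact key h (a1 * b) hh
        · calc (a1 * b) * (a2 * b) = a1 * (b * a2) * b := by
                rw [mul_assoc, mul_assoc, mul_assoc]
            _ = a1 * (a2 * b) * b := by rw [hcb a2 ha2]
            _ = (a1 * a2) * (b * b) := by rw [mul_assoc, mul_assoc, mul_assoc]
            _ = (a2 * a1) * (b * b) := by rw [hAcomm a1 a2 ha1 ha2]
            _ = a2 * (b * a1) * b := by rw [hcb a1 ha1]; rw [mul_assoc, mul_assoc, mul_assoc]
            _ = (a2 * b) * (a1 * b) := by rw [mul_assoc, mul_assoc, mul_assoc]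
    have hB2 : ∀ g : B, g * g = 1 := by
      intro g
      rcases hdecomp g with hg | ⟨a, ha, rfl⟩
      · exact hA2 g hg
      · calc (a * b) * (a * b) = a * (b * a) * b := by rw [mul_assoc, mul_assoc, mul_assoc]
          _ = a * (a * b) * b := by rw [hcb a ha]
          _ = (a * a) * (b * b) := by rw [mul_assoc, mul_assoc, mul_assoc]
          _ = 1 := by rw [hA2 a ha, hb, one_mul]
    letI : CommGroup B := { (inferInstance : Group B) with mul_comm := hBcomm }
    exact Stmt5Aux3.elemAbelian hcard hB2
  · -- dihedral case
    right
    push_neg at hcb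
    obtain ⟨x, hxA, hx0⟩ := hcb
    classical
    have hbb : ∀ g : B, b * (b * g) = g := fun g => by rw [← mul_assoc, hb, one_mul]
    have hxinv : x⁻¹ = x := inv_eq_of_mul_eq_one_right (hA2 x hxA)
    set w := b * x * b with hw
    have hwA : w ∈ A := hconjmem x hxA
    have hwx : w ≠ x := by
      intro h
      apply hx0
      have h2 := congrArg (fun t => t * b) h
      rw [mul_assoc, mul_assoc, hb, mul_one] at h2
      exact h2
    have hx1 : x ≠ 1 := by
      intro h
      apply hwx
      rw [hw, h, mul_one, hb]
    have hw1 : w ≠ 1 := by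
      intro h
      apply hx1
      have h2 : b * w * b = x := by
        rw [hw]
        simp only [← mul_assoc]
        rw [hb, one_mul, mul_assoc, hb, mul_one]
      rw [← h2, h, mul_one, hb]
    set y := x * w with hy
    have hyA : y ∈ A := A.mul_mem hxA hwA
    have hy1 : y ≠ 1 := by
      intro h
      rw [hy] at h
      apply hwx
      rw [← hxinv]
      exact eq_inv_of_mul_eq_one_right h
    have hyx : y ≠ x := by
      intro h
      rw [hy] at h
      apply hw1
      exact mul_left_cancel (a := x) (by rw [h, mul_one] : x * w = x * 1)
    have hyw : y ≠ w := by
      intro h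
      rw [hy] at h
      apply hx1
      exact mul_right_cancel (b := w) (by rw [h, one_mul] : x * w = 1 * w)
    have hyfix : b * y * b = y := by
      have hcxw := hAcomm w x hwA hxA
      rw [hw] at hcxw
      rw [hy, hw]
      simp only [mul_assoc] at hcxw ⊢
      rw [hb, mul_one]
      exact hcxw
    -- the subgroup of elements of A fixed by conjugation by b
    let K : Subgroup B :=
      { carrier := {g | g ∈ A ∧ b * g * b = g}
        one_mem' := ⟨A.one_mem, by rw [mul_one, hb]⟩
        mul_mem' := by
          rintro u v ⟨huA, hu⟩ ⟨hvA, hv⟩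
          refine ⟨A.mul_mem huA hvA, ?_⟩
          have key : (b * u * b) * (b * v * b) = b * (u * v) * b := by
            simp only [mul_assoc]
            rw [hbb]
          rw [← key, hu, hv]
        inv_mem' := by
          rintro u ⟨huA, hu⟩
          refine ⟨A.inv_mem huA, ?_⟩
          have : b * u⁻¹ * b = (b * u * b)⁻¹ := by
            rw [mul_inv_rev, mul_inv_rev, hbinv, mul_assoc]
          rw [this, hu] }
    have hKmem : ∀ g : B, g ∈ K ↔ (g ∈ A ∧ b * g * b = g) := fun g => Iff.rfl
    -- the squaring-type homomorphism a ↦ a * (b * a * b) from A to K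
    let φ : (↥A) →* (↥K) :=
      { toFun := fun a => ⟨(a : B) * (b * (a : B) * b),
          ⟨A.mul_mem a.2 (hconjmem _ a.2), by
            have hca := hAcomm (b * (a : B) * b) (a : B) (hconjmem _ a.2) a.2
            simp only [mul_assoc] at hca ⊢
            rw [hb, mul_one]
            exact hca⟩⟩
        map_one' := by
          ext
          simp only [Subgroup.coe_one, OneMemClass.coe_one, one_mul, mul_one, hb]
        map_mul' := by
          intro u v
          ext
          show ((u : B) * v) * (b * ((u : B) * v) * b) =
            ((u : B) * (b * (u : B) * b)) * ((v : B) * (b * (v : B) * b))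
          have key : b * ((u : B) * v) * b = (b * (u : B) * b) * (b * (v : B) * b) := by
            simp only [mul_assoc]
            rw [hbb]
          rw [key]
          exact Commute.mul_mul_mul_comm
            (hAcomm (v : B) (b * (u : B) * b) v.2 (hconjmem _ u.2)) _ _ }
    have hK3 : 3 ≤ Nat.card K := by
      have h8 : Nat.card (↥A) = Nat.card (↥A ⧸ φ.ker) * Nat.card φ.ker :=
        Subgroup.card_eq_card_quotient_mul_card_subgroup φ.ker
      have hq1 : Nat.card (↥A ⧸ φ.ker) = Nat.card φ.range :=
        Nat.card_congr (QuotientGroup.quotientKerEquivRange φ).toEquiv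
      have hr : Nat.card φ.range ≤ Nat.card K :=
        Nat.card_le_card_of_injective _ (Subtype.val_injective)
      have hk : Nat.card φ.ker ≤ Nat.card K := by
        have hinj : Function.Injective (fun a : φ.ker => ((a : ↥A) : B)) := by
          intro a1 a2 h
          ext
          exact h
        have hmapsto : ∀ a : φ.ker, ((a : ↥A) : B) ∈ K := by
          rintro ⟨⟨a, haA⟩, hker⟩
          rw [MonoidHom.mem_ker] at hker
          have : a * (b * a * b) = 1 := congrArg Subtype.val hker
          refine ⟨haA, ?_⟩
          have h2 : b * a * b = a⁻¹ := eq_inv_of_mul_eq_one_right this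
          rw [h2, inv_eq_of_mul_eq_one_right (hA2 a haA)]
        let f : φ.ker → ↥K := fun a => ⟨((a : ↥A) : B), hmapsto a⟩
        have : Function.Injective f := by
          intro a1 a2 h
          have h2 := congrArg (Subtype.val : ↥K → B) h
          exact Subtype.ext (Subtype.ext h2)
        exact Nat.card_le_card_of_injective f this
      rw [cardA, hq1] at h8
      by_contra hcon
      push_neg at hcon
      have h1 : Nat.card φ.range ≤ 2 := le_trans hr (by omega)
      have h2 : Nat.card φ.ker ≤ 2 := le_trans hk (by omega)
      have := Nat.mul_le_mul h1 h2
      omega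
    -- choose z in K distinct from 1 and y
    have hzex : ∃ z, z ∈ K ∧ z ≠ 1 ∧ z ≠ y := by
      by_contra hcon
      push_neg at hcon
      have hsub : (K : Set B) ⊆ {1, y} := by
        intro g hg
        by_cases h1 : g = 1
        · exact Or.inl h1
        · exact Or.inr (hcon g hg h1)
      have hle := Set.ncard_le_ncard hsub (Set.toFinite _)
      rw [← Nat.card_coe_set_eq] at hle
      have h2 : ({1, y} : Set B).ncard ≤ 2 := by
        refine le_trans (Set.ncard_insert_le 1 {y}) ?_
        rw [Set.ncard_singleton]
      have heq : Nat.card ↥K = Nat.card ((K : Set B)) := rfl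
      omega
    obtain ⟨z, ⟨hzA, hzfix⟩, hz1, hzy⟩ := hzex
    have hzx : z ≠ x := by
      intro h
      rw [h] at hzfix
      exact hwx hzfix
    have hbwb : b * w * b = x := by
      rw [hw]
      simp only [← mul_assoc]
      rw [hb, one_mul, mul_assoc, hb, mul_one]
    have hzw : z ≠ w := by
      intro h
      rw [h] at hzfix
      exact hwx (hbwb.symm.trans hzfix).symm
    -- p and q
    set p := x * b with hp
    have hpp : p * p = y := by
      rw [hp, hy, hw]
      simp only [mul_assoc]
    have hp4 : p ^ 4 = 1 := by
      have h : p ^ 4 = (p * p) * (p * p) := by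
        rw [show (4:ℕ) = 2 + 2 from rfl, pow_add, pow_two]
      rw [h, hpp, hA2 y hyA]
    have hqp : b * p * b = p⁻¹ := by
      rw [hp, mul_inv_rev, hxinv, hbinv]
      rw [← mul_assoc, mul_assoc, hb, mul_one]
    have hzz : z * z = 1 := hA2 z hzA
    -- commutation of z with p and b
    have hczb : Commute b z := by
      show b * z = z * b
      have := congrArg (fun t => t * b) hzfix
      rw [mul_assoc, mul_assoc, hb, mul_one] at this
      exact this
    have hczp : Commute p z := by
      show p * z = z * p
      rw [hp, mul_assoc, hczb.eq, ← mul_assoc, hAcomm x z hxA hzA, mul_assoc]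
    -- the homomorphism
    let f := Stmt5Aux.dihedralHom p b hp4 hb hqp
    let g := Stmt5Aux2.zmod2Hom z hzz
    have hcomm : ∀ m n, Commute (f m) (g n) := by
      intro m n
      rcases Stmt5Aux2.zmod2Hom_cases z hzz n with h | h
      · rw [h]; exact Commute.one_right _
      · rw [h]
        exact Stmt5Aux.dihedralHom_commute p b hp4 hb hqp z hczp hczb m
    let ψ := f.noncommCoprod g hcomm
    have hpmem : p ∈ ψ.range := by
      refine ⟨(DihedralGroup.r 1, 1), ?_⟩
      show f (DihedralGroup.r 1) * g 1 = p
      rw [map_one, mul_one, Stmt5Aux.dihedralHom_r_one]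
    have hqmem : b ∈ ψ.range := by
      refine ⟨(DihedralGroup.sr 0, 1), ?_⟩
      show f (DihedralGroup.sr 0) * g 1 = b
      rw [map_one, mul_one, Stmt5Aux.dihedralHom_sr_zero]
    have hzmem : z ∈ ψ.range := by
      refine ⟨(1, Multiplicative.ofAdd 1), ?_⟩
      show f 1 * g (Multiplicative.ofAdd 1) = z
      rw [map_one, one_mul, Stmt5Aux2.zmod2Hom_one]
    have hxmem : x ∈ ψ.range := by
      have := ψ.range.mul_mem hpmem hqmem
      rw [hp, mul_assoc, hb, mul_one] at this
      exact this
    have hwmem : w ∈ ψ.range := by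
      have := ψ.range.mul_mem hqmem hpmem
      rw [hp, ← mul_assoc, ← hw] at this
      exact this
    have hymem : y ∈ ψ.range := by
      have := ψ.range.mul_mem hxmem hwmem
      rw [← hy] at this
      exact this
    -- nine distinct elements of the range
    have houtA : ∀ u : B, u ∈ A → u * b ∉ A := by
      intro u hu hub
      apply hbA
      have := A.mul_mem (A.inv_mem hu) hub
      rw [← mul_assoc, inv_mul_cancel, one_mul] at this
      exact this
    have hnotA : ∀ u : B, u ∈ A → ∀ v : B, v ∈ A → u ≠ v * b := by
      intro u hu v hv h
      exact houtA v hv (h ▸ hu)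
    have hcancel : ∀ u v : B, u * b = v * b → u = v := by
      intro u v h
      exact mul_right_cancel h
    have n01 : ((1 : B)) ≠ (x) := Ne.symm hx1
    have n02 : ((1 : B)) ≠ (w) := Ne.symm hw1
    have n03 : ((1 : B)) ≠ (y) := Ne.symm hy1
    have n04 : ((1 : B)) ≠ (z) := Ne.symm hz1
    have n05 : ((1 : B)) ≠ (b) := fun h => hbA (h ▸ A.one_mem)
    have n06 : ((1 : B)) ≠ (x * b) := fun h => houtA x hxA (h ▸ A.one_mem)
    have n07 : ((1 : B)) ≠ (w * b) := fun h => houtA w hwA (h ▸ A.one_mem)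
    have n08 : ((1 : B)) ≠ (y * b) := fun h => houtA y hyA (h ▸ A.one_mem)
    have n12 : (x) ≠ (w) := Ne.symm hwx
    have n13 : (x) ≠ (y) := Ne.symm hyx
    have n14 : (x) ≠ (z) := Ne.symm hzx
    have n15 : (x) ≠ (b) := fun h => hbA (h ▸ hxA)
    have n16 : (x) ≠ (x * b) := fun h => houtA x hxA (h ▸ hxA)
    have n17 : (x) ≠ (w * b) := fun h => houtA w hwA (h ▸ hxA)
    have n18 : (x) ≠ (y * b) := fun h => houtA y hyA (h ▸ hxA)
    have n23 : (w) ≠ (y) := Ne.symm hyw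
    have n24 : (w) ≠ (z) := Ne.symm hzw
    have n25 : (w) ≠ (b) := fun h => hbA (h ▸ hwA)
    have n26 : (w) ≠ (x * b) := fun h => houtA x hxA (h ▸ hwA)
    have n27 : (w) ≠ (w * b) := fun h => houtA w hwA (h ▸ hwA)
    have n28 : (w) ≠ (y * b) := fun h => houtA y hyA (h ▸ hwA)
    have n34 : (y) ≠ (z) := Ne.symm hzy
    have n35 : (y) ≠ (b) := fun h => hbA (h ▸ hyA)
    have n36 : (y) ≠ (x * b) := fun h => houtA x hxA (h ▸ hyA)
    have n37 : (y) ≠ (w * b) := fun h => houtA w hwA (h ▸ hyA)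
    have n38 : (y) ≠ (y * b) := fun h => houtA y hyA (h ▸ hyA)
    have n45 : (z) ≠ (b) := fun h => hbA (h ▸ hzA)
    have n46 : (z) ≠ (x * b) := fun h => houtA x hxA (h ▸ hzA)
    have n47 : (z) ≠ (w * b) := fun h => houtA w hwA (h ▸ hzA)
    have n48 : (z) ≠ (y * b) := fun h => houtA y hyA (h ▸ hzA)
    have n56 : (b) ≠ (x * b) := fun h => hx1 (hcancel x 1 (by rw [one_mul]; exact h.symm))
    have n57 : (b) ≠ (w * b) := fun h => hw1 (hcancel w 1 (by rw [one_mul]; exact h.symm))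
    have n58 : (b) ≠ (y * b) := fun h => hy1 (hcancel y 1 (by rw [one_mul]; exact h.symm))
    have n67 : (x * b) ≠ (w * b) := fun h => (Ne.symm hwx) (hcancel x w h)
    have n68 : (x * b) ≠ (y * b) := fun h => (Ne.symm hyx) (hcancel x y h)
    have n78 : (w * b) ≠ (y * b) := fun h => (Ne.symm hyw) (hcancel w y h)
    let S : Finset B := {1, x, w, y, z, b, x * b, w * b, y * b}
    have hScard : S.card = 9 := by
      show ({(1 : B), x, w, y, z, b, x * b, w * b, y * b} : Finset B).card = 9
      rw [Finset.card_insert_of_notMem (by simp only [Finset.mem_insert, Finset.mem_singleton]; push_neg; exact ⟨n01, n02, n03, n04, n05, n06, n07, n08⟩),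
        Finset.card_insert_of_notMem (by simp only [Finset.mem_insert, Finset.mem_singleton]; push_neg; exact ⟨n12, n13, n14, n15, n16, n17, n18⟩),
        Finset.card_insert_of_notMem (by simp only [Finset.mem_insert, Finset.mem_singleton]; push_neg; exact ⟨n23, n24, n25, n26, n27, n28⟩),
        Finset.card_insert_of_notMem (by simp only [Finset.mem_insert, Finset.mem_singleton]; push_neg; exact ⟨n34, n35, n36, n37, n38⟩),
        Finset.card_insert_of_notMem (by simp only [Finset.mem_insert, Finset.mem_singleton]; push_neg; exact ⟨n45, n46, n47, n48⟩),
        Finset.card_insert_of_notMem (by simp only [Finset.mem_insert, Finset.mem_singleton]; push_neg; exact ⟨n56, n57, n58⟩),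
        Finset.card_insert_of_notMem (by simp only [Finset.mem_insert, Finset.mem_singleton]; push_neg; exact ⟨n67, n68⟩),
        Finset.card_insert_of_notMem (by simp only [Finset.mem_singleton]; exact n78), Finset.card_singleton]
    have hwbmem : w * b ∈ ψ.range := by
      have h1 : w * b = b * x := by
        rw [hw, mul_assoc, mul_assoc, hb, mul_one]
      rw [h1]
      exact ψ.range.mul_mem hqmem hxmem
    have hsub : (S : Set B) ⊆ (ψ.range : Set B) := by
      intro g hg
      have hg2 : g ∈ (({(1:B), x, w, y, z, b, x * b, w * b, y * b} : Finset B) : Set B) := hg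
      simp only [Finset.coe_insert, Set.mem_insert_iff, Finset.coe_singleton,
        Set.mem_singleton_iff] at hg2
      rcases hg2 with rfl | rfl | rfl | rfl | rfl | rfl | rfl | rfl | rfl
      · exact ψ.range.one_mem
      · exact hxmem
      · exact hwmem
      · exact hymem
      · exact hzmem
      · exact hqmem
      · rw [← hp]; exact hpmem
      · exact hwbmem
      · exact ψ.range.mul_mem hymem hqmem
    have h9 : 9 ≤ Nat.card ψ.range := by
      have h1 : ((S : Set B)).ncard = 9 := by rw [Set.ncard_coe_finset, hScard]
      have h2 := Set.ncard_le_ncard hsub (Set.toFinite _)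
      rw [h1] at h2
      have h3 : Nat.card ↥ψ.range = ((ψ.range : Set B)).ncard := Nat.card_coe_set_eq _
      omega
    have hdvd := Subgroup.card_subgroup_dvd_card ψ.range
    rw [cardB] at hdvd
    have hle : Nat.card ψ.range ≤ 16 := Nat.le_of_dvd (by norm_num) hdvd
    have h16 : Nat.card ψ.range = 16 := by
      set n := Nat.card ↥ψ.range with hn
      interval_cases n <;> first | rfl | (exact absurd hdvd (by decide))
    have htop : ψ.range = ⊤ := Subgroup.eq_top_of_card_eq _ (by rw [h16, cardB])
    have hsurj : Function.Surjective ψ := by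
      rw [← MonoidHom.range_eq_top]
      exact htop
    have hbij : Function.Bijective ψ := by
      refine (Nat.bijective_iff_surjective_and_card ψ).mpr ⟨hsurj, ?_⟩
      rw [cardB]
      simp only [Nat.card_eq_fintype_card, Fintype.card_prod, DihedralGroup.card,
        Fintype.card_multiplicative, ZMod.card]
    exact ⟨(MulEquiv.ofBijective ψ hbij).symm⟩
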